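/- arXiv:2107.09790 — 5 statements merged into one kernel-verified Lean document; each statement's English description precedes it below -/
import Mathlib

section
/- Let d ≥ 2 and let p, q, h be positive integers with p ≥ qd and h ≥ 2; set k := p/q, b := h^{q(d−1)}, t := h^{p−dq}, and let γ^{(p,q,h)} := ⟨b, tb, tb, …, tb, b⟩ (with b − 2 copies of tb). Then for every ε > 0 there exists h_0 ∈ ℕ such that for all h ≥ h_0: (1) |k^{(d)}(γ^{(p,q,h)}) − k| < ε, and (2) |k^{(d−1)}(γ^{(p,q,h)}) − s(d,k)| < ε. -/
noncomputable section
open Classical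

/-! ### Graph-metric notions -/

/-- The graph ball of radius `R` (an integer) around `x` in the path metric. -/
def gBall {V : Type*} (G : SimpleGraph V) (x : V) (R : ℕ) : Set V :=
  {y | G.dist x y ≤ R}

/-- The graph ball of real radius `r` around `x` in the path metric. -/
def gBallReal {V : Type*} (G : SimpleGraph V) (x : V) (r : ℝ) : Set V :=
  {y | (G.dist x y : ℝ) ≤ r}

/-- The graph sphere of radius `R` around `x` in the path metric. -/
def gSphere {V : Type*} (G : SimpleGraph V) (x : V) (R : ℕ) : Set V :=
  {y | G.dist x y = R}

/-- The diameter (in the path metric) of a set `S` of vertices, as a real number. -/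
def graphSetDiam {V : Type*} (G : SimpleGraph V) (S : Set V) : ℝ :=
  sSup {r : ℝ | ∃ x ∈ S, ∃ y ∈ S, r = (G.dist x y : ℝ)}

/-- `G` contains (at least) `n` pairwise vertex-disjoint paths, each with one endpoint
in `S` and the other endpoint in `T`. -/
def HasDisjointPathsBetween {V : Type*} (G : SimpleGraph V) (S T : Set V) (n : ℕ) : Prop :=
  ∃ (u v : Fin n → V) (p : ∀ i, G.Walk (u i) (v i)),
    (∀ i, (p i).IsPath) ∧ (∀ i, u i ∈ S) ∧ (∀ i, v i ∈ T) ∧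
    ∀ i j, i ≠ j → List.Disjoint (p i).support (p j).support

/-! ### Subdivisions -/

/-- The `m`-subdivision of a graph `G`: every edge is replaced by a path with `m` edges,
introducing `m - 1` new internal vertices on each edge. -/
def Subdivision {V : Type*} (G : SimpleGraph V) (m : ℕ) :
    SimpleGraph (V ⊕ (G.edgeSet × Fin (m - 1))) :=
  SimpleGraph.fromRel fun x y =>
    match x, y with
    | Sum.inl a, Sum.inl b => m = 1 ∧ G.Adj a b
    | Sum.inl a, Sum.inr (e, k) =>
        (k.val = 0 ∧ a = (Quot.out (e : Sym2 V)).1) ∨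
        (k.val = m - 2 ∧ a = (Quot.out (e : Sym2 V)).2)
    | Sum.inr (e, k), Sum.inr (e', k') => e = e' ∧ k'.val = k.val + 1
    | Sum.inr _, Sum.inl _ => False

/-! ### Sphere packings -/

/-- A packing of balls in `ℝ^d`, indexed by `ι`: closed balls with positive radii and
pairwise disjoint interiors. -/
structure BallPacking (d : ℕ) (ι : Type) where
  center : ι → EuclideanSpace ℝ (Fin d)
  radius : ι → ℝ
  radius_pos : ∀ i, 0 < radius i
  interior_disjoint : Pairwise fun i j =>
    Disjoint (Metric.ball (center i) (radius i)) (Metric.ball (center j) (radius j))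

/-- The closed ball with index `i` in the packing. -/
def BallPacking.cball {d : ℕ} {ι : Type} (P : BallPacking d ι) (i : ι) :
    Set (EuclideanSpace ℝ (Fin d)) :=
  Metric.closedBall (P.center i) (P.radius i)

/-- The tangency graph of a ball packing: two balls are adjacent when they intersect
in exactly one point. -/
def BallPacking.tangencyGraph {d : ℕ} {ι : Type} (P : BallPacking d ι) : SimpleGraph ι where
  Adj i j := i ≠ j ∧ ∃ p, P.cball i ∩ P.cball j = {p}
  symm := ⟨by
    rintro i j ⟨hij, p, hp⟩
    exact ⟨hij.symm, p, by rwa [Set.inter_comm]⟩⟩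
  loopless := ⟨fun i h => h.1 rfl⟩

/-- `G` is `M`-uniformly sphere-packed in `ℝ^d`: `G` is isomorphic to the tangency graph of
a packing of interior-disjoint closed balls in which the ratio of radii of any two
tangent balls lies in `[1/M, M]`. -/
def IsUniformlySpherePacked (d : ℕ) (M : ℝ) {V : Type*} (G : SimpleGraph V) : Prop :=
  ∃ (ι : Type) (P : BallPacking d ι), Nonempty (G ≃g P.tangencyGraph) ∧
    ∀ i j, P.tangencyGraph.Adj i j → P.radius i / P.radius j ∈ Set.Icc M⁻¹ M

/-! ### Tiles and tilings -/

/-- An axis-parallel closed hyperrectangle in `ℝ^d`, recorded by its lower and upper corners. -/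
structure Tile (d : ℕ) where
  lower : Fin d → ℝ
  upper : Fin d → ℝ

/-- The subset of `ℝ^d` occupied by a tile. -/
def Tile.toSet {d : ℕ} (A : Tile d) : Set (EuclideanSpace ℝ (Fin d)) :=
  {x | ∀ i, x i ∈ Set.Icc (A.lower i) (A.upper i)}

/-- The (open) interior of a tile. -/
def Tile.inner {d : ℕ} (A : Tile d) : Set (EuclideanSpace ℝ (Fin d)) :=
  {x | ∀ i, x i ∈ Set.Ioo (A.lower i) (A.upper i)}

/-- The side length of a tile along the `i`-th axis. -/
def Tile.len {d : ℕ} (A : Tile d) (i : Fin d) : ℝ := A.upper i - A.lower i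

/-- Two tiles intersect in a set of nonzero `(d-1)`-dimensional volume: there is exactly one
coordinate in which their ranges meet in a single point, while in all other coordinates
their ranges overlap in a nondegenerate interval. -/
def Tile.Tangent {d : ℕ} (A B : Tile d) : Prop :=
  ∃ i, max (A.lower i) (B.lower i) = min (A.upper i) (B.upper i) ∧
    ∀ j, j ≠ i → max (A.lower j) (B.lower j) < min (A.upper j) (B.upper j)

/-- The tangency graph of a collection of tiles: an edge between distinct tiles whose
intersection has nonzero `(d-1)`-dimensional volume. -/
def tangencyGraph {d : ℕ} (T : Set (Tile d)) : SimpleGraph T where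
  Adj A B := A ≠ B ∧ (Tile.Tangent A.1 B.1 ∨ Tile.Tangent B.1 A.1)
  symm := ⟨by rintro A B ⟨h1, h2⟩; exact ⟨h1.symm, h2.symm⟩⟩
  loopless := ⟨fun A h => h.1 rfl⟩

/-- The unit cube `[0,1]^d`. -/
def unitCube (d : ℕ) : Set (EuclideanSpace ℝ (Fin d)) :=
  {x | ∀ i, x i ∈ Set.Icc (0:ℝ) 1}

/-- `T` is a tiling of the unit cube `[0,1]^d`: a finite collection of nondegenerate tiles with
pairwise disjoint interiors whose union is `[0,1]^d`. -/
def IsUnitTiling (d : ℕ) (T : Set (Tile d)) : Prop :=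
  T.Finite ∧ (∀ A ∈ T, ∀ i, A.lower i < A.upper i) ∧
    (T.Pairwise fun A B => Disjoint A.inner B.inner) ∧
    (⋃ A ∈ T, A.toSet) = unitCube d

/-- The product of two tiles: a scaled copy of `B` placed inside `A`. -/
def tileProd {d : ℕ} (A B : Tile d) : Tile d where
  lower := fun i => A.lower i + B.lower i * A.len i
  upper := fun i => A.lower i + B.upper i * A.len i

/-- The tiling product `S ∘ T`: every tile of `S` is replaced by a scaled copy of `T`. -/
def tilingProd {d : ℕ} (S T : Set (Tile d)) : Set (Tile d) :=
  Set.image2 tileProd S T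

/-- The identity tiling, consisting of the single tile `[0,1]^d`. -/
def unitTile (d : ℕ) : Tile d := ⟨fun _ => 0, fun _ => 1⟩

/-- The `n`-fold iterated tiling product of `T` with itself. -/
def tilingPow {d : ℕ} (T : Set (Tile d)) : ℕ → Set (Tile d)
  | 0 => {unitTile d}
  | n + 1 => tilingProd T (tilingPow T n)

/-- The aspect ratio `α_T` of a tiling: the maximum of `ℓ_j(A)/ℓ_j(B)` over pairs of tiles
adjacent in the tangency graph (at least `1`; equal to `1` for a single tile). -/
def tilingAlpha {d : ℕ} (T : Set (Tile d)) : ℝ :=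
  sSup (insert 1 {r | ∃ A ∈ T, ∃ B ∈ T,
    (A ≠ B ∧ (Tile.Tangent A B ∨ Tile.Tangent B A)) ∧ ∃ j, r = A.len j / B.len j})

/-- `L_T`: the maximal side length appearing in the tiling `T`. -/
def tilingL {d : ℕ} (T : Set (Tile d)) : ℝ :=
  sSup {r | ∃ A ∈ T, ∃ i, r = A.len i}

/-! ### The tilings `T_γ^{(d)}` and related quantities -/

/-- The tensor product of two sequences: `γ ⊗ γ' = ⟨γ_1γ'_1, …, γ_1γ'_b, …, γ_aγ'_1, …, γ_aγ'_b⟩`. -/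
def tensorSeq (γ γ' : List ℕ) : List ℕ :=
  γ.flatMap fun g => γ'.map fun g' => g * g'

/-- The `n`-fold tensor power of the sequence `γ` (with `γ^{⊗0} = ⟨1⟩`). -/
def tensorPow (γ : List ℕ) : ℕ → List ℕ
  | 0 => [1]
  | n + 1 => tensorSeq γ (tensorPow γ n)

/-- One tile of the tiling `T_γ^{(d)}`: the cell at grid position `v` inside the `i`-th slab. -/
def seqTile (d : ℕ) (γ : List ℕ) (i : Fin γ.length) (v : Fin d → ℕ) : Tile d where
  lower := fun j => if j.val < d - 1 then (v j : ℝ) / (γ.get i : ℝ)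
    else (i.val : ℝ) / (γ.length : ℝ)
  upper := fun j => if j.val < d - 1 then ((v j : ℝ) + 1) / (γ.get i : ℝ)
    else ((i.val : ℝ) + 1) / (γ.length : ℝ)

/-- The tiling `T_γ^{(d)}` of `[0,1]^d`: for each `1 ≤ i ≤ b`, the slab
`[0,1]^{d-1} × [(i-1)/b, i/b]` is tiled by a `γ_i × ⋯ × γ_i` grid of translates of
`[0,1/γ_i]^{d-1} × [0,1/b]`. -/
def seqTiling (d : ℕ) (γ : List ℕ) : Set (Tile d) :=
  {A | ∃ (i : Fin γ.length) (v : Fin d → ℕ),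
    (∀ j : Fin d, (j.val < d - 1 → v j < γ.get i) ∧ (¬ j.val < d - 1 → v j = 0)) ∧
    A = seqTile d γ i v}

/-- `|γ|^{(d)} = γ_1^{d-1} + ⋯ + γ_b^{d-1}`, the number of tiles of `T_γ^{(d)}`. -/
def seqSize (d : ℕ) (γ : List ℕ) : ℕ := (γ.map fun g => g ^ (d - 1)).sum

/-- The growth exponent `k^{(d)}(γ) = log(|γ|^{(d)}) / log |γ|`. -/
def growthExp (d : ℕ) (γ : List ℕ) : ℝ :=
  Real.log (seqSize d γ) / Real.log (γ.length : ℝ)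

/-- The exponent `s(d,k) = d - 1 + (k - d)(1 - 1/(d-1))`. -/
def sdk (d : ℕ) (k : ℝ) : ℝ := (d : ℝ) - 1 + (k - (d : ℝ)) * (1 - 1 / ((d : ℝ) - 1))

/-- The sequence `γ^{(p,q,h)} = ⟨b, tb, …, tb, b⟩` with `b = h^{q(d-1)}`, `t = h^{p-dq}`,
and `b - 2` middle entries. -/
def gammaSeq (d p q h : ℕ) : List ℕ :=
  [h ^ (q * (d - 1))] ++
    List.replicate (h ^ (q * (d - 1)) - 2) (h ^ (p - d * q) * h ^ (q * (d - 1))) ++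
    [h ^ (q * (d - 1))]

/-! ### The infinite cube packing `Ŝ` and the graph `Ĝ_γ^{(d)}` -/

/-- The cube packing `Ŝ_n` in `ℝ^d`: for each `1 ≤ i ≤ b^n`, the slab
`[0,γ_1^n]^{d-1} × [h_{i-1}, h_i]` is tiled by a grid of cubes of side
`s_i = γ_1^n / (γ^{⊗n})_i`, where `h_i = s_1 + ⋯ + s_i`. -/
def hatTiles (d : ℕ) (γ : List ℕ) (n : ℕ) : Set (Tile d) :=
  {A | ∃ (i : Fin (tensorPow γ n).length) (v : Fin d → ℕ),
    (∀ j : Fin d, (j.val < d - 1 → v j < (tensorPow γ n).get i) ∧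
      (¬ j.val < d - 1 → v j = 0)) ∧
    A = { lower := fun j => if j.val < d - 1
            then (v j : ℝ) * (((γ.headI : ℝ) ^ n) / ((tensorPow γ n).get i : ℝ))
            else ((((tensorPow γ n).take i.val).map
              fun g => ((γ.headI : ℝ) ^ n) / (g : ℝ)).sum)
          upper := fun j => if j.val < d - 1
            then ((v j : ℝ) + 1) * (((γ.headI : ℝ) ^ n) / ((tensorPow γ n).get i : ℝ))
            else ((((tensorPow γ n).take i.val).map
              fun g => ((γ.headI : ℝ) ^ n) / (g : ℝ)).sum) +
              ((γ.headI : ℝ) ^ n) / ((tensorPow γ n).get i : ℝ) }}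

/-- The infinite nested cube packing `Ŝ = ⋃_n Ŝ_n`. -/
def hatTiling (d : ℕ) (γ : List ℕ) : Set (Tile d) := ⋃ n, hatTiles d γ n

/-- The infinite tangency graph `Ĝ_γ^{(d)}`. -/
def hatGraph (d : ℕ) (γ : List ℕ) : SimpleGraph (hatTiling d γ) :=
  tangencyGraph (hatTiling d γ)

/-! ### Projections -/

/-- The projection of a tile onto its last `d - 1` coordinates. -/
def projTile {d : ℕ} (A : Tile d) : Tile (d - 1) where
  lower := fun j => A.lower ⟨j.val + 1, by have := j.isLt; omega⟩
  upper := fun j => A.upper ⟨j.val + 1, by have := j.isLt; omega⟩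

/-! ### Cubes, facets and neat cube packings -/

/-- The facet of a tile in direction `i` (upper facet if `s = true`, lower if `s = false`). -/
def Tile.facet {d : ℕ} (A : Tile d) (i : Fin d) (s : Bool) :
    Set (EuclideanSpace ℝ (Fin d)) :=
  {x ∈ A.toSet | x i = if s then A.upper i else A.lower i}

/-- A tile is a (nondegenerate) cube when all its side lengths are equal and positive. -/
def Tile.IsCube {d : ℕ} (A : Tile d) : Prop :=
  (∀ i j, A.len i = A.len j) ∧ ∀ i, 0 < A.len i

/-- The side length of a cube. -/
def Tile.side {d : ℕ} (A : Tile d) : ℝ := sSup (Set.range A.len)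

/-- Two cubes are neatly tangent: they have disjoint interiors and, whenever they intersect
along `(d-1)`-dimensional faces `F_A ⊆ A` and `F_B ⊆ B`, either `F_A ⊆ A ∩ B` or
`F_B ⊆ A ∩ B`. -/
def NeatlyTangent {d : ℕ} (A B : Tile d) : Prop :=
  Disjoint A.inner B.inner ∧
    ∀ (i : Fin d) (sa sb : Bool),
      (Tile.Tangent A B ∨ Tile.Tangent B A) →
      A.toSet ∩ B.toSet ⊆ A.facet i sa ∩ B.facet i sb →
      (A.facet i sa ⊆ A.toSet ∩ B.toSet ∨ B.facet i sb ⊆ A.toSet ∩ B.toSet)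

/-- A neat cube packing: a collection of closed axis-parallel cubes, every two of which are
either neatly tangent or disjoint. -/
def IsNeatCubePacking {d : ℕ} (C : Set (Tile d)) : Prop :=
  (∀ A ∈ C, A.IsCube) ∧
    C.Pairwise fun A B => NeatlyTangent A B ∨ Disjoint A.toSet B.toSet

/-- `G` admits an `α`-uniform neat cube packing in `ℝ^d`: `G` is isomorphic to the tangency
graph of a neat cube packing of aspect ratio at most `α`. -/
def AdmitsNeatCubePacking (d : ℕ) (α : ℝ) {V : Type*} (G : SimpleGraph V) : Prop :=
  ∃ C : Set (Tile d), IsNeatCubePacking C ∧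
    (∀ A ∈ C, ∀ B ∈ C, (A.toSet ∩ B.toSet).Nonempty → A.side ≤ α * B.side) ∧
    Nonempty (G ≃g tangencyGraph C)

/-- The cube `[a_1, a_1 + ℓ] × ⋯ × [a_d, a_d + ℓ]`, as a tile. -/
def cubeTile (d : ℕ) (a : EuclideanSpace ℝ (Fin d)) (ℓ : ℝ) : Tile d :=
  ⟨fun i => a i, fun i => a i + ℓ⟩

/-- `∂_ε C` for the cube `C` with corner `a` and side `ℓ`: the boundary points `x` such that
exactly `2d - 1` of the `2d` facets `F` of `C` satisfy `dist(x, F) > εℓ`. -/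
def bdryEps (d : ℕ) (a : EuclideanSpace ℝ (Fin d)) (ℓ ε : ℝ) :
    Set (EuclideanSpace ℝ (Fin d)) :=
  {x ∈ frontier (cubeTile d a ℓ).toSet |
    {p : Fin d × Bool | ε * ℓ < Metric.infDist x ((cubeTile d a ℓ).facet p.1 p.2)}.ncard
      = 2 * d - 1}

/-- The star graph with center `none` and leaves `some i`. -/
def starGraph (ι : Type) : SimpleGraph (Option ι) where
  Adj x y := (x = none ∧ y ≠ none) ∨ (y = none ∧ x ≠ none)
  symm := ⟨by rintro x y (⟨h1, h2⟩ | ⟨h1, h2⟩) <;> [exact Or.inr ⟨h1, h2⟩; exact Or.inl ⟨h1, h2⟩]⟩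
  loopless := ⟨by rintro x (⟨h1, h2⟩ | ⟨h1, h2⟩) <;> exact h2 h1⟩

lemma log_est (e : ℕ) (he : 1 ≤ e) (B T : ℝ) (hB : 4 ≤ B) (hT : 1 ≤ T) :
    |Real.log (2*B^(e-1) + (B-2)*(T*B)^(e-1))
      - ((e:ℝ)*Real.log B + ((e-1 : ℕ):ℝ)*Real.log T)| ≤ Real.log 2 := by
  obtain ⟨f, rfl⟩ : ∃ f, e = f + 1 := ⟨e - 1, by omega⟩
  simp only [Nat.add_sub_cancel]
  have hB0 : (0:ℝ) < B := by linarith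
  have hT0 : (0:ℝ) < T := by linarith
  have hTf : (1:ℝ) ≤ T^f := one_le_pow₀ hT
  set c : ℝ := 2/(B*T^f) + (B-2)/B with hc
  have hc1 : 1/2 ≤ c := by
    have : (1:ℝ)/2 ≤ (B-2)/B := by rw [div_le_div_iff₀ (by norm_num) hB0]; linarith
    have h2 : 0 ≤ 2/(B*T^f) := by positivity
    linarith
  have hc2 : c ≤ 1 := by
    have h1 : 2/(B*T^f) ≤ 2/B := by
      apply div_le_div_of_nonneg_left (by norm_num) hB0
      nlinarith
    have h2 : (B-2)/B = 1 - 2/B := by field_simp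
    rw [hc, h2]; linarith
  have hc0 : (0:ℝ) < c := lt_of_lt_of_le (by norm_num) hc1
  have hS : 2*B^f + (B-2)*(T*B)^f = B^(f+1) * T^f * c := by
    rw [hc, mul_pow]; field_simp; ring
  rw [hS, Real.log_mul (by positivity) (ne_of_gt hc0),
    Real.log_mul (by positivity) (by positivity), Real.log_pow, Real.log_pow]
  have hlc1 : Real.log c ≤ 0 := Real.log_nonpos (by linarith) hc2
  have hlc2 : -Real.log 2 ≤ Real.log c := by
    have := Real.log_le_log (by norm_num : (0:ℝ) < 1/2) hc1
    rw [show (1:ℝ)/2 = 2⁻¹ by norm_num, Real.log_inv] at this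
    linarith
  have h2pos : (0:ℝ) ≤ Real.log 2 := Real.log_nonneg (by norm_num)
  rw [abs_le]
  push_cast
  constructor <;> linarith

lemma key_real (e : ℕ) (he : 1 ≤ e) (B T A C lh : ℝ) (hB : 4 ≤ B) (hT : 1 ≤ T)
    (hA : 1 ≤ A) (hlh : 0 < lh) (hlogB : Real.log B = A * lh)
    (hlogT : Real.log T = C * lh) :
    |Real.log (2*B^(e-1) + (B-2)*(T*B)^(e-1)) / (A * lh)
      - ((e:ℝ)*A + ((e-1:ℕ):ℝ)*C)/A| ≤ Real.log 2 / lh := by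
  have hAL : 0 < A * lh := by nlinarith
  have hdiff : Real.log (2*B^(e-1) + (B-2)*(T*B)^(e-1)) / (A * lh)
      - ((e:ℝ)*A + ((e-1:ℕ):ℝ)*C)/A
      = (Real.log (2*B^(e-1) + (B-2)*(T*B)^(e-1))
          - ((e:ℝ)*Real.log B + ((e-1:ℕ):ℝ)*Real.log T)) / (A * lh) := by
    rw [hlogB, hlogT]; field_simp
  rw [hdiff, abs_div, abs_of_pos hAL]
  have hnum := log_est e he B T hB hT
  calc |Real.log (2*B^(e-1) + (B-2)*(T*B)^(e-1))
          - ((e:ℝ)*Real.log B + ((e-1:ℕ):ℝ)*Real.log T)| / (A * lh)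
      ≤ Real.log 2 / (A * lh) := by gcongr
    _ ≤ Real.log 2 / lh := by
        apply div_le_div_of_nonneg_left (Real.log_nonneg (by norm_num)) hlh
        nlinarith

lemma cast_size (e b t : ℕ) (hb : 2 ≤ b) :
    ((2 * b^(e-1) + (b-2) * (t*b)^(e-1) : ℕ) : ℝ)
      = 2*(b:ℝ)^(e-1) + ((b:ℝ)-2)*((t:ℝ)*(b:ℝ))^(e-1) := by
  push_cast [Nat.cast_sub hb]
  ring

lemma key_est (e d p q h : ℕ) (he : 1 ≤ e) (hq : 0 < q) (hd : 2 ≤ d) (hh : 4 ≤ h) :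
    |growthExp e (gammaSeq d p q h) -
      ((e:ℝ)*((q*(d-1):ℕ):ℝ) + ((e-1:ℕ):ℝ)*((p-d*q:ℕ):ℝ))/((q*(d-1):ℕ):ℝ)|
      ≤ Real.log 2 / Real.log h := by
  have hexp : 1 ≤ q * (d-1) := by
    have h1 : 1 ≤ d - 1 := by omega
    calc 1 = 1*1 := by ring
    _ ≤ q * (d-1) := Nat.mul_le_mul hq h1
  have hb4 : 4 ≤ h ^ (q*(d-1)) := le_trans hh (Nat.le_self_pow (by omega) h)
  have ht1 : 1 ≤ h ^ (p-d*q) := Nat.one_le_pow _ h (by omega)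
  have hlen : (gammaSeq d p q h).length = h ^ (q*(d-1)) := by
    simp [gammaSeq]; omega
  have hsize : seqSize e (gammaSeq d p q h)
      = 2 * (h^(q*(d-1)))^(e-1) + (h^(q*(d-1)) - 2) * ((h^(p-d*q)) * h^(q*(d-1)))^(e-1) := by
    simp [seqSize, gammaSeq, List.sum_replicate, smul_eq_mul]
    ring
  have hlogh : 0 < Real.log h := Real.log_pos (by exact_mod_cast (by omega : 1 < h))
  have hge : growthExp e (gammaSeq d p q h)
      = Real.log (2*((h^(q*(d-1)):ℕ):ℝ)^(e-1) +
          (((h^(q*(d-1)):ℕ):ℝ)-2)*(((h^(p-d*q):ℕ):ℝ)*((h^(q*(d-1)):ℕ):ℝ))^(e-1))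
        / (((q*(d-1):ℕ):ℝ) * Real.log h) := by
    rw [growthExp, hsize, hlen, cast_size e _ _ (by omega)]
    congr 1
    rw [Nat.cast_pow, Real.log_pow]
  rw [hge]
  exact key_real e he _ _ _ _ _ (by exact_mod_cast hb4) (by exact_mod_cast ht1)
    (by exact_mod_cast hexp) hlogh
    (by rw [Nat.cast_pow, Real.log_pow]) (by rw [Nat.cast_pow, Real.log_pow])

lemma ident_d (d p q : ℕ) (hd : 2 ≤ d) (hq : 0 < q) (hpq : q * d ≤ p) :
    ((d:ℝ)*((q*(d-1):ℕ):ℝ) + ((d-1:ℕ):ℝ)*((p-d*q:ℕ):ℝ))/((q*(d-1):ℕ):ℝ)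
      = (p:ℝ)/(q:ℝ) := by
  have h1 : ((d-1:ℕ):ℝ) = (d:ℝ) - 1 := by
    rw [Nat.cast_sub (by omega)]; norm_num
  have h2 : ((p-d*q:ℕ):ℝ) = (p:ℝ) - (d:ℝ)*(q:ℝ) := by
    rw [Nat.cast_sub (by rw [mul_comm d q]; exact hpq)]; push_cast; ring
  have h3 : ((q*(d-1):ℕ):ℝ) = (q:ℝ) * ((d:ℝ)-1) := by push_cast [Nat.cast_sub (by omega : 1 ≤ d)]; ring
  have hd1 : (d:ℝ) - 1 ≠ 0 := by
    have : (2:ℝ) ≤ (d:ℝ) := by exact_mod_cast hd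
    linarith
  have hq0 : (q:ℝ) ≠ 0 := by positivity
  rw [h1, h2, h3]
  field_simp
  ring

lemma ident_dm1 (d p q : ℕ) (hd : 2 ≤ d) (hq : 0 < q) (hpq : q * d ≤ p) :
    (((d-1:ℕ):ℝ)*((q*(d-1):ℕ):ℝ) + ((d-1-1:ℕ):ℝ)*((p-d*q:ℕ):ℝ))/((q*(d-1):ℕ):ℝ)
      = sdk d ((p:ℝ)/(q:ℝ)) := by
  have h1 : ((d-1:ℕ):ℝ) = (d:ℝ) - 1 := by
    rw [Nat.cast_sub (by omega)]; norm_num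
  have h1' : ((d-1-1:ℕ):ℝ) = (d:ℝ) - 2 := by
    rw [show d-1-1 = d-2 by omega, Nat.cast_sub hd]; norm_num
  have h2 : ((p-d*q:ℕ):ℝ) = (p:ℝ) - (d:ℝ)*(q:ℝ) := by
    rw [Nat.cast_sub (by rw [mul_comm d q]; exact hpq)]; push_cast; ring
  have h3 : ((q*(d-1):ℕ):ℝ) = (q:ℝ) * ((d:ℝ)-1) := by push_cast [Nat.cast_sub (by omega : 1 ≤ d)]; ring
  have hd1 : (d:ℝ) - 1 ≠ 0 := by
    have : (2:ℝ) ≤ (d:ℝ) := by exact_mod_cast hd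
    linarith
  have hq0 : (q:ℝ) ≠ 0 := by positivity
  rw [h1, h1', h2, h3, sdk]
  field_simp
  ring

/-- **Limiting exponents** (Lemma 2.7). -/
theorem degree_limit (d p q : ℕ) (hd : 2 ≤ d) (hp : 0 < p) (hq : 0 < q) (hpq : q * d ≤ p)
    (ε : ℝ) (hε : 0 < ε) :
    ∃ h₀ : ℕ, ∀ h : ℕ, h₀ ≤ h → 2 ≤ h →
      |growthExp d (gammaSeq d p q h) - (p : ℝ) / (q : ℝ)| < ε ∧
      |growthExp (d - 1) (gammaSeq d p q h) - sdk d ((p : ℝ) / (q : ℝ))| < ε := by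
  refine ⟨max 4 (⌈Real.exp (Real.log 2 / ε)⌉₊ + 1), fun h hh0 hh2 => ?_⟩
  have hh4 : 4 ≤ h := le_trans (le_max_left _ _) hh0
  have hhe : Real.exp (Real.log 2 / ε) < (h:ℝ) := by
    have h1 : (⌈Real.exp (Real.log 2 / ε)⌉₊ + 1 : ℕ) ≤ h := le_trans (le_max_right _ _) hh0
    have h2 : Real.exp (Real.log 2 / ε) ≤ (⌈Real.exp (Real.log 2 / ε)⌉₊ : ℝ) :=
      Nat.le_ceil _
    have h3 : ((⌈Real.exp (Real.log 2 / ε)⌉₊ + 1 : ℕ) : ℝ) ≤ (h:ℝ) := by exact_mod_cast h1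
    push_cast at h3
    linarith
  have hlogh : 0 < Real.log h :=
    Real.log_pos (by exact_mod_cast (by omega : 1 < h))
  have hsmall : Real.log 2 / Real.log h < ε := by
    have h4 : Real.log 2 / ε < Real.log h := by
      calc Real.log 2 / ε = Real.log (Real.exp (Real.log 2 / ε)) := (Real.log_exp _).symm
      _ < Real.log h := Real.log_lt_log (Real.exp_pos _) hhe
    rw [div_lt_iff₀ hlogh]
    rw [div_lt_iff₀ hε] at h4
    linarith
  constructor
  · have := key_est d d p q h (by omega) hq hd hh4
    rw [ident_d d p q hd hq hpq] at this
    exact lt_of_le_of_lt this hsmall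
  · have := key_est (d-1) d p q h (by omega) hq hd hh4
    rw [ident_dm1 d p q hd hq hpq] at this
    exact lt_of_le_of_lt this hsmall


end
end

section
/- Let d ≥ 2 and let S, T be tilings of [0,1]^d whose tangency graphs are connected, and let G = G(S∘T). Then for every tile X ∈ S∘T, the ball of radius diam(G(T)) around X in G contains at least |T| tiles: |B_G(X, diam(G(T)))| ≥ |T|. -/
noncomputable section
open Classical

section Aux

variable {d : ℕ}

lemma tileProd_len (A B : Tile d) (i : Fin d) :
    (tileProd A B).len i = B.len i * A.len i := by
  simp [tileProd, Tile.len]; ring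

lemma aux_max (a L x y : ℝ) (hL : 0 ≤ L) :
    max (a + x * L) (a + y * L) = a + max x y * L := by
  rw [max_mul_of_nonneg _ _ hL, max_add_add_left]

lemma aux_min (a L x y : ℝ) (hL : 0 ≤ L) :
    min (a + x * L) (a + y * L) = a + min x y * L := by
  rw [min_mul_of_nonneg _ _ hL, min_add_add_left]

lemma tangent_tileProd (A B B' : Tile d) (hA : ∀ i, 0 < A.len i)
    (h : Tile.Tangent B B') : Tile.Tangent (tileProd A B) (tileProd A B') := by
  obtain ⟨i, h1, h2⟩ := h
  refine ⟨i, ?_, fun j hj => ?_⟩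
  · show max (A.lower i + B.lower i * A.len i) (A.lower i + B'.lower i * A.len i)
      = min (A.lower i + B.upper i * A.len i) (A.lower i + B'.upper i * A.len i)
    rw [aux_max _ _ _ _ (hA i).le, aux_min _ _ _ _ (hA i).le, h1]
  · show max (A.lower j + B.lower j * A.len j) (A.lower j + B'.lower j * A.len j)
      < min (A.lower j + B.upper j * A.len j) (A.lower j + B'.upper j * A.len j)
    rw [aux_max _ _ _ _ (hA j).le, aux_min _ _ _ _ (hA j).le]
    exact (add_lt_add_iff_left _).mpr (mul_lt_mul_of_pos_right (h2 j hj) (hA j))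

lemma tileProd_injective (A : Tile d) (hA : ∀ i, 0 < A.len i) :
    Function.Injective (tileProd A) := by
  intro B B' h
  have hl := congrArg Tile.lower h
  have hu := congrArg Tile.upper h
  cases B; cases B'
  simp only [tileProd, Tile.mk.injEq] at hl hu ⊢
  constructor <;> funext i
  · have := congrFun hl i
    exact mul_right_cancel₀ (ne_of_gt (hA i)) (add_left_cancel this)
  · have := congrFun hu i
    exact mul_right_cancel₀ (ne_of_gt (hA i)) (add_left_cancel this)

end Aux

/-- (Lemma 3.1). For tilings `S, T` of `[0,1]^d` with connected tangency graphs and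
`G = G(S∘T)`, every `X ∈ S∘T` satisfies `|B_G(X, diam G(T))| ≥ |T|`. -/
theorem contract_growth_lower_bound (d : ℕ) (hd : 2 ≤ d) (S T : Set (Tile d))
    (hS : IsUnitTiling d S) (hT : IsUnitTiling d T)
    (hSc : (tangencyGraph S).Connected) (hTc : (tangencyGraph T).Connected)
    (X : (tilingProd S T)) :
    T.ncard ≤ (gBall (tangencyGraph (tilingProd S T)) X ((tangencyGraph T).diam)).ncard := by
  classical
  -- finiteness of the product tiling
  have hfin : (tilingProd S T).Finite := Set.Finite.image2 _ hS.1 hT.1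
  have : Finite ↥(tilingProd S T) := hfin
  obtain ⟨A, hA, B, hB, hX⟩ := Set.mem_image2.mp X.2
  have hAlen : ∀ i, 0 < A.len i := fun i => sub_pos.mpr (hS.2.1 A hA i)
  -- the embedding of T's tiles into the product tiling
  let F : ↥T → ↥(tilingProd S T) := fun b => ⟨tileProd A b.1, Set.mem_image2_of_mem hA b.2⟩
  have hFinj : Function.Injective F := by
    intro b b' h
    exact Subtype.ext (tileProd_injective A hAlen (congrArg Subtype.val h))
  -- graph homomorphism
  let hom : tangencyGraph T →g tangencyGraph (tilingProd S T) :=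
    { toFun := F
      map_rel' := by
        intro b b' hbb'
        obtain ⟨hne, htan⟩ : b ≠ b' ∧ (Tile.Tangent b.1 b'.1 ∨ Tile.Tangent b'.1 b.1) := hbb'
        refine (⟨fun h => hne (hFinj h), ?_⟩ : F b ≠ F b' ∧ _)
        rcases htan with h | h
        · exact Or.inl (tangent_tileProd A _ _ hAlen h)
        · exact Or.inr (tangent_tileProd A _ _ hAlen h) }
  -- distance bound
  have hXF : X = F ⟨B, hB⟩ := Subtype.ext hX.symm
  have hrange : Set.range F ⊆ gBall (tangencyGraph (tilingProd S T)) X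
      ((tangencyGraph T).diam) := by
    rintro _ ⟨b, rfl⟩
    have : Nonempty ↥T := ⟨⟨B, hB⟩⟩
    have hreach := hTc ⟨B, hB⟩ b
    obtain ⟨p, hp⟩ := hTc.exists_walk_length_eq_dist ⟨B, hB⟩ b
    have hd1 : (tangencyGraph (tilingProd S T)).dist X (F b)
        ≤ (tangencyGraph T).dist ⟨B, hB⟩ b := by
      rw [hXF]
      calc (tangencyGraph (tilingProd S T)).dist (F ⟨B, hB⟩) (F b)
          ≤ (p.map hom).length := SimpleGraph.dist_le _
        _ = p.length := p.length_map hom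
        _ = _ := hp
    have : Finite ↥T := hT.1
    have hne : (tangencyGraph T).edist ⟨B, hB⟩ b ≠ ⊤ :=
      SimpleGraph.edist_ne_top_iff_reachable.mpr hreach
    have hediam : (tangencyGraph T).ediam ≠ ⊤ := by
      obtain ⟨u, v, huv⟩ :=
        (tangencyGraph T).exists_edist_eq_ediam_of_finite (α := ↥T)
      rw [← huv]
      exact SimpleGraph.edist_ne_top_iff_reachable.mpr (hTc u v)
    exact le_trans hd1 (SimpleGraph.dist_le_diam hediam)
  have hball_fin : (gBall (tangencyGraph (tilingProd S T)) X
      ((tangencyGraph T).diam)).Finite := Set.toFinite _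
  calc T.ncard = Nat.card ↥T := (Nat.card_coe_set_eq T).symm
    _ = (Set.range F).ncard := by
        rw [← Nat.card_coe_set_eq, Nat.card_range_of_injective hFinj]
    _ ≤ _ := Set.ncard_le_ncard hrange hball_fin

end
end

section
/- Let d ≥ 2 and let T be a tiling of [0,1]^d. Then every tile A ∈ T satisfies deg_{G(T)}(A) ≤ 3^d · α_T^{2d}, where deg_{G(T)}(A) is the degree of A in the tangency graph G(T). -/
noncomputable section
open Classical

/-! ### Auxiliary lemmas for the degree bound -/

lemma Tile.Tangent.symm' {d : ℕ} {A B : Tile d} (h : Tile.Tangent A B) : Tile.Tangent B A := by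
  obtain ⟨i, h1, h2⟩ := h
  refine ⟨i, by rw [max_comm, min_comm]; exact h1, fun j hj => by
    rw [max_comm, min_comm]; exact h2 j hj⟩

/-- An open axis-parallel box in Euclidean space. -/
def euclBox {d : ℕ} (a b : Fin d → ℝ) : Set (EuclideanSpace ℝ (Fin d)) :=
  ((MeasurableEquiv.toLp 2 (Fin d → ℝ)).symm) ⁻¹' (Set.univ.pi fun i => Set.Ioo (a i) (b i))

lemma mem_euclBox {d : ℕ} {a b : Fin d → ℝ} {x : EuclideanSpace ℝ (Fin d)} :
    x ∈ euclBox a b ↔ ∀ i, x i ∈ Set.Ioo (a i) (b i) := by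
  simp only [euclBox, Set.mem_preimage, Set.mem_pi, Set.mem_univ, forall_true_left]
  rfl

lemma measurableSet_euclBox {d : ℕ} (a b : Fin d → ℝ) : MeasurableSet (euclBox a b) :=
  ((MeasurableEquiv.toLp 2 (Fin d → ℝ)).symm).measurable
    (MeasurableSet.univ_pi fun _ => measurableSet_Ioo)

lemma volume_euclBox {d : ℕ} (a b : Fin d → ℝ) :
    MeasureTheory.volume (euclBox a b) = ∏ i, ENNReal.ofReal (b i - a i) := by
  rw [euclBox, (EuclideanSpace.volume_preserving_symm_measurableEquiv_toLp (Fin d)).measure_preimage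
    (MeasurableSet.univ_pi fun _ => measurableSet_Ioo).nullMeasurableSet,
    MeasureTheory.volume_pi_pi]
  simp [Real.volume_Ioo]

/-- **Degree bound** (Lemma 3.3). In a tiling `T` of `[0,1]^d`, every tile has degree at most
`3^d · α_T^{2d}` in the tangency graph. -/
theorem tiling_degree_bound (d : ℕ) (hd : 2 ≤ d) (T : Set (Tile d)) (hT : IsUnitTiling d T)
    (A : T) :
    (((tangencyGraph T).neighborSet A).ncard : ℝ) ≤ (3 : ℝ) ^ d * tilingAlpha T ^ (2 * d) := by
  classical
  obtain ⟨hfin, hnd, hdisj, -⟩ := hT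
  haveI := hfin.to_subtype
  set α := tilingAlpha T with hαdef
  -- basic facts about α
  have hsetfin : ({r | ∃ C ∈ T, ∃ B ∈ T,
      (C ≠ B ∧ (Tile.Tangent C B ∨ Tile.Tangent B C)) ∧ ∃ j, r = C.len j / B.len j} :
      Set ℝ).Finite := by
    apply Set.Finite.subset ((hfin.prod (hfin.prod (Set.finite_univ (α := Fin d)))).image
      (fun p : Tile d × Tile d × Fin d => p.1.len p.2.2 / p.2.1.len p.2.2))
    rintro r ⟨C, hC, B, hB, -, j, rfl⟩
    exact ⟨(C, B, j), ⟨hC, hB, trivial⟩, rfl⟩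
  have hbdd : BddAbove (insert (1:ℝ) {r | ∃ C ∈ T, ∃ B ∈ T,
      (C ≠ B ∧ (Tile.Tangent C B ∨ Tile.Tangent B C)) ∧ ∃ j, r = C.len j / B.len j}) :=
    (hsetfin.insert 1).bddAbove
  have hα1 : (1:ℝ) ≤ α := le_csSup hbdd (Set.mem_insert _ _)
  have hα0 : (0:ℝ) < α := lt_of_lt_of_le one_pos hα1
  have hlen : ∀ C ∈ T, ∀ j, 0 < Tile.len C j := fun C hC j => sub_pos.2 (hnd C hC j)
  have key : ∀ B : T, (tangencyGraph T).Adj A B →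
      ∀ j, (A : Tile d).len j / (B : Tile d).len j ≤ α := by
    intro B hadj j
    refine le_csSup hbdd (Set.mem_insert_of_mem _ ?_)
    exact ⟨A.1, A.2, B.1, B.2, ⟨fun h => hadj.1 (Subtype.ext h), hadj.2⟩, j, rfl⟩
  set ℓ : Fin d → ℝ := fun j => (A : Tile d).len j with hℓdef
  set δ : Fin d → ℝ := fun j => ℓ j / α with hδdef
  have hℓpos : ∀ j, 0 < ℓ j := fun j => hlen A.1 A.2 j
  have hδpos : ∀ j, 0 < δ j := fun j => div_pos (hℓpos j) hα0
  have hδℓ : ∀ j, δ j ≤ ℓ j := fun j => div_le_self (hℓpos j).le hα1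
  -- the boxes
  set c : Tile d → Fin d → ℝ := fun B j =>
    min (max ((A : Tile d).lower j) (B.lower j)) (B.upper j - δ j) with hcdef
  set Q : Tile d → Set (EuclideanSpace ℝ (Fin d)) :=
    fun B => euclBox (c B) (fun j => c B j + δ j) with hQdef
  set E : Set (EuclideanSpace ℝ (Fin d)) :=
    euclBox (fun j => (A : Tile d).lower j - ℓ j) (fun j => (A : Tile d).upper j + ℓ j) with hEdef
  have hQprops : ∀ B : T, (tangencyGraph T).Adj A B →
      Q B.1 ⊆ Tile.inner B.1 ∧ Q B.1 ⊆ E := by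
    intro B hadj
    have htang : Tile.Tangent A.1 B.1 := by
      rcases hadj.2 with h | h
      · exact h
      · exact h.symm'
    have hle : ∀ j, max ((A:Tile d).lower j) ((B:Tile d).lower j)
        ≤ min ((A:Tile d).upper j) ((B:Tile d).upper j) := by
      obtain ⟨i, h1, h2⟩ := htang
      intro j
      by_cases hj : j = i
      · subst hj; exact h1.le
      · exact (h2 j hj).le
    have hδB : ∀ j, δ j ≤ Tile.len B.1 j := by
      intro j
      have hB := hlen B.1 B.2 j
      have hk := (div_le_iff₀ hB).mp (key B hadj j)
      rw [hδdef]
      simp only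
      rw [div_le_iff₀ hα0, mul_comm]
      exact hk
    -- basic interval inequalities
    have hc1 : ∀ j, (B:Tile d).lower j ≤ c B.1 j := by
      intro j
      refine le_min (le_max_right _ _) ?_
      have := hδB j
      simp only [Tile.len] at this
      linarith
    have hc2 : ∀ j, c B.1 j + δ j ≤ (B:Tile d).upper j := by
      intro j
      have := min_le_right (max ((A:Tile d).lower j) ((B:Tile d).lower j))
        ((B:Tile d).upper j - δ j)
      simp only [hcdef]
      linarith
    have hc3 : ∀ j, (A:Tile d).lower j - ℓ j ≤ c B.1 j := by
      intro j
      refine le_min ?_ ?_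
      · have h1 := le_max_left ((A:Tile d).lower j) ((B:Tile d).lower j)
        have := (hℓpos j).le
        linarith
      · have h1 : (A:Tile d).lower j ≤ (B:Tile d).upper j :=
          le_trans (le_trans (le_max_left _ _) (hle j)) (min_le_right _ _)
        have := hδℓ j
        linarith
    have hc4 : ∀ j, c B.1 j + δ j ≤ (A:Tile d).upper j + ℓ j := by
      intro j
      have h1 : c B.1 j ≤ (A:Tile d).upper j :=
        le_trans (min_le_left _ _) (le_trans (hle j) (min_le_left _ _))
      have := hδℓ j
      linarith
    constructor
    · intro x hx
      rw [hQdef] at hx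
      rw [mem_euclBox] at hx
      intro j
      obtain ⟨hx1, hx2⟩ := hx j
      exact ⟨lt_of_le_of_lt (hc1 j) hx1, lt_of_lt_of_le hx2 (hc2 j)⟩
    · intro x hx
      rw [hQdef] at hx
      rw [mem_euclBox] at hx
      rw [hEdef, mem_euclBox]
      intro j
      obtain ⟨hx1, hx2⟩ := hx j
      exact ⟨lt_of_le_of_lt (hc3 j) hx1, lt_of_lt_of_le hx2 (hc4 j)⟩
  -- the neighbor set as a finset
  set S : Set T := (tangencyGraph T).neighborSet A with hSdef
  have hSfin : S.Finite := S.toFinite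
  set F : Finset T := hSfin.toFinset with hFdef
  have hmemF : ∀ B : T, B ∈ F ↔ (tangencyGraph T).Adj A B := by
    intro B
    rw [hFdef, Set.Finite.mem_toFinset]
    exact Iff.rfl
  have hcard : ((tangencyGraph T).neighborSet A).ncard = F.card :=
    Set.ncard_eq_toFinset_card _ hSfin
  -- measure bound
  have hQvol : ∀ B : Tile d, MeasureTheory.volume (Q B) = ∏ j, ENNReal.ofReal (δ j) := by
    intro B
    rw [hQdef]
    simp only
    rw [volume_euclBox]
    congr 1
    ext j
    ring_nf
  have hdisjQ : (↑F : Set T).PairwiseDisjoint (fun B : T => Q B.1) := by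
    intro B hB B' hB' hne
    have h1 := (hQprops B ((hmemF B).1 (by simpa using hB))).1
    have h2 := (hQprops B' ((hmemF B').1 (by simpa using hB'))).1
    have hne' : B.1 ≠ B'.1 := fun h => hne (Subtype.ext h)
    exact Set.disjoint_of_subset h1 h2 (hdisj B.2 B'.2 hne')
  have hsum : MeasureTheory.volume (⋃ B ∈ F, Q B.1) = ∑ B ∈ F, MeasureTheory.volume (Q B.1) :=
    MeasureTheory.measure_biUnion_finset hdisjQ (fun B _ => measurableSet_euclBox _ _)
  have hunion_sub : (⋃ B ∈ F, Q B.1) ⊆ E := by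
    intro x hx
    simp only [Set.mem_iUnion] at hx
    obtain ⟨B, hB, hx⟩ := hx
    exact (hQprops B ((hmemF B).1 hB)).2 hx
  have hEvol : MeasureTheory.volume E = ∏ j, ENNReal.ofReal (3 * ℓ j) := by
    rw [hEdef, volume_euclBox]
    congr 1
    ext j
    congr 1
    simp only [hℓdef, Tile.len]
    ring
  have hmain : (F.card : ENNReal) * ∏ j, ENNReal.ofReal (δ j) ≤ ∏ j, ENNReal.ofReal (3 * ℓ j) := by
    calc (F.card : ENNReal) * ∏ j, ENNReal.ofReal (δ j)
        = ∑ _B ∈ F, ∏ j, ENNReal.ofReal (δ j) := by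
          rw [Finset.sum_const, nsmul_eq_mul]
      _ = ∑ B ∈ F, MeasureTheory.volume (Q B.1) := by
          refine Finset.sum_congr rfl fun B _ => ?_
          rw [hQvol]
      _ = MeasureTheory.volume (⋃ B ∈ F, Q B.1) := hsum.symm
      _ ≤ MeasureTheory.volume E := MeasureTheory.measure_mono hunion_sub
      _ = ∏ j, ENNReal.ofReal (3 * ℓ j) := hEvol
  -- convert to real numbers
  have hδprod : (0:ℝ) < ∏ j, δ j := Finset.prod_pos fun j _ => hδpos j
  have hreal : (F.card : ℝ) * ∏ j, δ j ≤ ∏ j, 3 * ℓ j := by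
    have h1 : (∏ j, ENNReal.ofReal (δ j)) = ENNReal.ofReal (∏ j, δ j) :=
      (ENNReal.ofReal_prod_of_nonneg (fun j _ => (hδpos j).le)).symm
    have h2 : (∏ j, ENNReal.ofReal (3 * ℓ j)) = ENNReal.ofReal (∏ j, 3 * ℓ j) :=
      (ENNReal.ofReal_prod_of_nonneg (fun j _ => mul_nonneg (by norm_num) (hℓpos j).le)).symm
    rw [h1, h2] at hmain
    have h3 : (F.card : ENNReal) = ENNReal.ofReal (F.card : ℝ) := by
      rw [ENNReal.ofReal_natCast]
    rw [h3, ← ENNReal.ofReal_mul (by positivity)] at hmain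
    exact (ENNReal.ofReal_le_ofReal_iff
      (Finset.prod_nonneg fun j _ => mul_nonneg (by norm_num) (hℓpos j).le)).mp hmain
  have hδprodeq : (∏ j, δ j) = (∏ j, ℓ j) / α ^ d := by
    rw [hδdef]
    simp only
    rw [Finset.prod_div_distrib, Finset.prod_const]
    congr 1
    simp
  have h3prod : (∏ j, 3 * ℓ j) = 3 ^ d * ∏ j, ℓ j := by
    rw [Finset.prod_mul_distrib, Finset.prod_const]
    congr 1
    simp
  have hℓprod : (0:ℝ) < ∏ j, ℓ j := Finset.prod_pos fun j _ => hℓpos j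
  have hαpow : (0:ℝ) < α ^ d := pow_pos hα0 d
  have hcard_le : (F.card : ℝ) ≤ 3 ^ d * α ^ d := by
    rw [hδprodeq, h3prod] at hreal
    have h4 := mul_le_mul_of_nonneg_right hreal hαpow.le
    have h5 : (F.card : ℝ) * ((∏ j, ℓ j) / α ^ d) * α ^ d = F.card * ∏ j, ℓ j := by
      field_simp
    rw [h5] at h4
    have h6 : (F.card : ℝ) * ∏ j, ℓ j ≤ (3 ^ d * α ^ d) * ∏ j, ℓ j := by
      calc (F.card : ℝ) * ∏ j, ℓ j ≤ 3 ^ d * (∏ j, ℓ j) * α ^ d := h4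
        _ = (3 ^ d * α ^ d) * ∏ j, ℓ j := by ring
    exact le_of_mul_le_mul_right h6 hℓprod
  have hfinal : (3:ℝ) ^ d * α ^ d ≤ 3 ^ d * α ^ (2 * d) := by
    apply mul_le_mul_of_nonneg_left (pow_le_pow_right₀ hα1 (by omega)) (by positivity)
  rw [hcard]
  exact le_trans hcard_le hfinal

end
end

section
/- Let d ≥ 2 and let γ = ⟨γ_1,…,γ_a⟩ and γ′ = ⟨γ′_1,…,γ′_{b}⟩ be sequences of positive integers with γ′_1 = γ′_{b}. Then α_{T^{(d)}_{γ⊗γ′}} ≤ max(α_{T^{(d)}_γ}, α_{T^{(d)}_{γ′}}). -/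
noncomputable section
open Classical

namespace AlphaAux

def rset {d : ℕ} (T : Set (Tile d)) : Set ℝ :=
  {r | ∃ A ∈ T, ∃ B ∈ T,
    (A ≠ B ∧ (Tile.Tangent A B ∨ Tile.Tangent B A)) ∧ ∃ j, r = A.len j / B.len j}

lemma tilingAlpha_eq {d : ℕ} (T : Set (Tile d)) :
    tilingAlpha T = sSup (insert 1 (rset T)) := rfl

lemma seqTile_len {d : ℕ} (γ : List ℕ) (i : Fin γ.length) (v : Fin d → ℕ) (j : Fin d) :
    (seqTile d γ i v).len j =
      if j.val < d - 1 then 1 / (γ.get i : ℝ) else 1 / (γ.length : ℝ) := by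
  unfold Tile.len seqTile
  by_cases h : j.val < d - 1 <;> simp only [h, if_true, if_false] <;> ring

lemma slab_of_tangent {d : ℕ} (hd : 2 ≤ d) {γ : List ℕ} (hb : 0 < γ.length)
    {i i' : Fin γ.length} {v v' : Fin d → ℕ}
    (h : Tile.Tangent (seqTile d γ i v) (seqTile d γ i' v')) :
    i.val = i'.val ∨ i'.val = i.val + 1 ∨ i.val = i'.val + 1 := by
  obtain ⟨i₀, heq, hlt⟩ := h
  have hbR : (0:ℝ) < (γ.length : ℝ) := by exact_mod_cast hb
  have hb0 : (γ.length : ℝ) ≠ 0 := hbR.ne'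
  by_cases h0 : i₀.val < d - 1
  · left
    have hj : (⟨d - 1, by omega⟩ : Fin d) ≠ i₀ := by
      intro he
      have : d - 1 = i₀.val := congrArg Fin.val he
      omega
    have H := hlt _ hj
    simp only [seqTile] at H
    rw [if_neg (lt_irrefl _), if_neg (lt_irrefl _), if_neg (lt_irrefl _),
      if_neg (lt_irrefl _)] at H
    rw [max_lt_iff, lt_min_iff, lt_min_iff] at H
    obtain ⟨⟨h1, h2⟩, ⟨h3, h4⟩⟩ := H
    have e2 : ((i.val : ℝ)) < (i'.val : ℝ) + 1 := by
      have := (div_lt_div_iff₀ hbR hbR).mp h2; nlinarith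
    have e3 : ((i'.val : ℝ)) < (i.val : ℝ) + 1 := by
      have := (div_lt_div_iff₀ hbR hbR).mp h3; nlinarith
    have n2 : i.val < i'.val + 1 := by exact_mod_cast e2
    have n3 : i'.val < i.val + 1 := by exact_mod_cast e3
    omega
  · simp only [seqTile, h0, if_false] at heq
    rcases le_total i.val i'.val with hle | hle
    · have hleR : ((i.val : ℝ)) ≤ (i'.val : ℝ) := by exact_mod_cast hle
      rw [max_eq_right (div_le_div_of_nonneg_right hleR hbR.le),
        min_eq_left (div_le_div_of_nonneg_right (by linarith) hbR.le)] at heq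
      have : (i'.val : ℝ) = (i.val : ℝ) + 1 := by
        field_simp at heq; linarith
      right; left; exact_mod_cast this
    · have hleR : ((i'.val : ℝ)) ≤ (i.val : ℝ) := by exact_mod_cast hle
      rw [max_eq_left (div_le_div_of_nonneg_right hleR hbR.le),
        min_eq_right (div_le_div_of_nonneg_right (by linarith) hbR.le)] at heq
      have : (i.val : ℝ) = (i'.val : ℝ) + 1 := by
        field_simp at heq; linarith
      right; right; exact_mod_cast this


lemma get_mem' {α : Type*} (l : List α) (i : Fin l.length) : l.get i ∈ l :=
  l.get_mem i

lemma div_one_div (x y : ℝ) : (1/x)/(1/y) = y/x := by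
  rw [div_div_div_comm, one_div_one, one_div_div]

lemma rset_char {d : ℕ} (hd : 2 ≤ d) {γ : List ℕ} (hne : γ ≠ [])
    (hpos : ∀ x ∈ γ, 0 < x) {r : ℝ} (hr : r ∈ rset (seqTiling d γ)) :
    r = 1 ∨ ∃ k : ℕ, ∃ hk : k + 1 < γ.length,
      (r = (γ.get ⟨k + 1, hk⟩ : ℝ) / (γ.get ⟨k, by omega⟩ : ℝ) ∨
       r = (γ.get ⟨k, by omega⟩ : ℝ) / (γ.get ⟨k + 1, hk⟩ : ℝ)) := by
  have hb : 0 < γ.length := List.length_pos_iff.mpr hne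
  have hbR : (0:ℝ) < (γ.length : ℝ) := by exact_mod_cast hb
  obtain ⟨A, hA, B, hB, ⟨hAB, htan⟩, j, hj⟩ := hr
  obtain ⟨i, v, hv, rfl⟩ := hA
  obtain ⟨i', v', hv', rfl⟩ := hB
  have hslab : i.val = i'.val ∨ i'.val = i.val + 1 ∨ i.val = i'.val + 1 := by
    rcases htan with ht | ht
    · exact slab_of_tangent hd hb ht
    · rcases slab_of_tangent hd hb ht with h | h | h
      · exact Or.inl h.symm
      · exact Or.inr (Or.inr h)
      · exact Or.inr (Or.inl h)
  rw [seqTile_len, seqTile_len] at hj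
  by_cases hjd : j.val < d - 1
  · rw [if_pos hjd, if_pos hjd, div_one_div] at hj
    rcases hslab with h | h | h
    · left
      have he : i = i' := Fin.ext h
      subst he
      rw [hj, div_self]
      exact_mod_cast (hpos _ (get_mem' γ i)).ne'
    · right
      refine ⟨i.val, by omega, Or.inl ?_⟩
      have e1 : γ.get ⟨i.val + 1, by omega⟩ = γ.get i' := by
        congr 1
        exact Fin.ext h.symm
      have e2 : γ.get ⟨i.val, by omega⟩ = γ.get i := by
        congr 1
      rw [e1, e2]; exact hj
    · right
      refine ⟨i'.val, by omega, Or.inr ?_⟩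
      have e1 : γ.get ⟨i'.val + 1, by omega⟩ = γ.get i := by
        congr 1
        exact Fin.ext h.symm
      have e2 : γ.get ⟨i'.val, by omega⟩ = γ.get i' := by
        congr 1
      rw [e1, e2]; exact hj
  · rw [if_neg hjd, if_neg hjd, div_self (one_div_ne_zero hbR.ne')] at hj
    exact Or.inl hj

lemma mem_rset_of {d : ℕ} {T : Set (Tile d)} {A B : Tile d} (hA : A ∈ T) (hB : B ∈ T)
    (hne : A ≠ B) (ht : Tile.Tangent A B ∨ Tile.Tangent B A) (j : Fin d) :
    A.len j / B.len j ∈ rset T := ⟨A, hA, B, hB, ⟨hne, ht⟩, j, rfl⟩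

lemma seqTile_mem {d : ℕ} {γ : List ℕ} (hpos : ∀ x ∈ γ, 0 < x)
    (i : Fin γ.length) : seqTile d γ i (fun _ => 0) ∈ seqTiling d γ :=
  ⟨i, fun _ => 0, fun _ => ⟨fun _ => hpos _ (get_mem' γ i), fun _ => rfl⟩, rfl⟩

lemma seqTile_ne {d : ℕ} (hd : 2 ≤ d) {γ : List ℕ} {i i' : Fin γ.length}
    (h : i ≠ i') (v v' : Fin d → ℕ) : seqTile d γ i v ≠ seqTile d γ i' v' := by
  intro he
  have hbR : (0:ℝ) < (γ.length : ℝ) := by exact_mod_cast i.pos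
  have hb0 : (γ.length : ℝ) ≠ 0 := hbR.ne'
  have hc := congrArg (fun t => Tile.lower t ⟨d - 1, by omega⟩) he
  simp only [seqTile] at hc
  rw [if_neg (lt_irrefl _), if_neg (lt_irrefl _)] at hc
  have : (i.val : ℝ) = i'.val := by field_simp at hc; exact_mod_cast hc
  exact h (Fin.ext (by exact_mod_cast this))

lemma consTangent {d : ℕ} (hd : 2 ≤ d) {γ : List ℕ} (hpos : ∀ x ∈ γ, 0 < x)
    {k : ℕ} (hk : k + 1 < γ.length) :
    Tile.Tangent (seqTile d γ ⟨k, by omega⟩ (fun _ => 0)) (seqTile d γ ⟨k+1, hk⟩ (fun _ => 0)) := by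
  have hbR : (0:ℝ) < (γ.length : ℝ) := by
    have : 0 < γ.length := by omega
    exact_mod_cast this
  refine ⟨⟨d - 1, by omega⟩, ?_, ?_⟩
  · simp only [seqTile]
    rw [if_neg (lt_irrefl _), if_neg (lt_irrefl _), if_neg (lt_irrefl _), if_neg (lt_irrefl _)]
    push_cast
    rw [max_eq_right (div_le_div_of_nonneg_right (by linarith) hbR.le),
      min_eq_left (div_le_div_of_nonneg_right (by linarith) hbR.le)]
  · intro j hjne
    have hjd : j.val < d - 1 := by
      have := j.isLt
      rcases Nat.lt_or_ge j.val (d-1) with h | h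
      · exact h
      · exact absurd (Fin.ext (show j.val = d - 1 by omega)) hjne
    simp only [seqTile]
    rw [if_pos hjd, if_pos hjd, if_pos hjd, if_pos hjd]
    have hg1 : (0:ℝ) < (γ.get ⟨k, by omega⟩ : ℝ) := by
      exact_mod_cast hpos _ (get_mem' γ _)
    have hg2 : (0:ℝ) < (γ.get ⟨k+1, hk⟩ : ℝ) := by
      exact_mod_cast hpos _ (get_mem' γ _)
    simp only [Nat.cast_zero, zero_div, max_self, Nat.cast_ofNat, zero_add]
    refine lt_min_iff.mpr ⟨?_, ?_⟩ <;> positivity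

lemma consRatio_mem {d : ℕ} (hd : 2 ≤ d) {γ : List ℕ} (hpos : ∀ x ∈ γ, 0 < x)
    {k : ℕ} (hk : k + 1 < γ.length) :
    ((γ.get ⟨k + 1, hk⟩ : ℝ) / (γ.get ⟨k, by omega⟩ : ℝ)) ∈ rset (seqTiling d γ) ∧
    ((γ.get ⟨k, by omega⟩ : ℝ) / (γ.get ⟨k + 1, hk⟩ : ℝ)) ∈ rset (seqTiling d γ) := by
  have hne : (⟨k, by omega⟩ : Fin γ.length) ≠ ⟨k+1, hk⟩ := by
    intro h
    have := congrArg Fin.val h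
    simp at this
  have htan := consTangent (d := d) hd hpos hk
  have hA := seqTile_mem (d := d) hpos ⟨k, by omega⟩
  have hB := seqTile_mem (d := d) hpos ⟨k+1, hk⟩
  have hlenA : (seqTile d γ ⟨k, by omega⟩ (fun _ => 0)).len ⟨0, by omega⟩
      = 1 / (γ.get ⟨k, by omega⟩ : ℝ) := by
    rw [seqTile_len, if_pos (show (0:ℕ) < d - 1 by omega)]
  have hlenB : (seqTile d γ ⟨k+1, hk⟩ (fun _ => 0)).len ⟨0, by omega⟩
      = 1 / (γ.get ⟨k+1, hk⟩ : ℝ) := by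
    rw [seqTile_len, if_pos (show (0:ℕ) < d - 1 by omega)]
  constructor
  · have := mem_rset_of hA hB (seqTile_ne hd hne _ _) (Or.inl htan) ⟨0, by omega⟩
    rwa [hlenA, hlenB, div_one_div] at this
  · have := mem_rset_of hB hA (seqTile_ne hd hne.symm _ _) (Or.inr htan) ⟨0, by omega⟩
    rwa [hlenB, hlenA, div_one_div] at this

lemma bddAbove_alpha {d : ℕ} (hd : 2 ≤ d) {γ : List ℕ} (hne : γ ≠ [])
    (hpos : ∀ x ∈ γ, 0 < x) :
    BddAbove (insert 1 (rset (seqTiling d γ))) := by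
  refine ⟨max 1 (γ.sum : ℝ), ?_⟩
  rintro r (rfl | hr)
  · exact le_max_left _ _
  have key : ∀ (a b : Fin γ.length), (γ.get a : ℝ) / (γ.get b : ℝ) ≤ max 1 (γ.sum : ℝ) := by
    intro a b
    refine le_trans ?_ (le_max_right _ _)
    have h1 : (1:ℝ) ≤ (γ.get b : ℝ) := by
      have : 1 ≤ γ.get b := hpos _ (get_mem' γ b)
      exact_mod_cast this
    refine le_trans (div_le_self (by positivity) h1) ?_
    have : γ.get a ≤ γ.sum := List.single_le_sum (fun x _ => Nat.zero_le x) _ (get_mem' γ a)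
    exact_mod_cast this
  rcases rset_char hd hne hpos hr with rfl | ⟨k, hk, h | h⟩
  · exact le_max_left _ _
  · rw [h]; exact key _ _
  · rw [h]; exact key _ _

lemma one_le_alpha {d : ℕ} (hd : 2 ≤ d) {γ : List ℕ} (hne : γ ≠ [])
    (hpos : ∀ x ∈ γ, 0 < x) : (1:ℝ) ≤ tilingAlpha (seqTiling d γ) := by
  rw [tilingAlpha_eq]
  exact le_csSup (bddAbove_alpha hd hne hpos) (Set.mem_insert _ _)

lemma consRatio_le {d : ℕ} (hd : 2 ≤ d) {γ : List ℕ} (hne : γ ≠ [])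
    (hpos : ∀ x ∈ γ, 0 < x) {k : ℕ} (hk : k + 1 < γ.length) :
    (γ.get ⟨k + 1, hk⟩ : ℝ) / (γ.get ⟨k, by omega⟩ : ℝ) ≤ tilingAlpha (seqTiling d γ) ∧
    (γ.get ⟨k, by omega⟩ : ℝ) / (γ.get ⟨k + 1, hk⟩ : ℝ) ≤ tilingAlpha (seqTiling d γ) := by
  rw [tilingAlpha_eq]
  exact ⟨le_csSup (bddAbove_alpha hd hne hpos)
      (Set.mem_insert_of_mem _ (consRatio_mem hd hpos hk).1),
    le_csSup (bddAbove_alpha hd hne hpos)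
      (Set.mem_insert_of_mem _ (consRatio_mem hd hpos hk).2)⟩

lemma tensorSeq_length (γ γ' : List ℕ) :
    (tensorSeq γ γ').length = γ.length * γ'.length := by
  induction γ with
  | nil => simp [tensorSeq]
  | cons g γ ih =>
    simp only [tensorSeq, List.flatMap_cons, List.length_append, List.length_map,
      List.length_cons] at *
    rw [ih]; ring

lemma tensorSeq_getElem (γ γ' : List ℕ) (hb : 0 < γ'.length) :
    ∀ (k : ℕ) (h : k < γ.length * γ'.length),
    (tensorSeq γ γ')[k]'(by rw [tensorSeq_length]; exact h) =
      γ[k / γ'.length]'((Nat.div_lt_iff_lt_mul hb).mpr h) *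
      γ'[k % γ'.length]'(Nat.mod_lt _ hb) := by
  induction γ with
  | nil => intro k h; simp at h
  | cons g γ ih =>
    intro k h
    have e : tensorSeq (g :: γ) γ' = (γ'.map fun g' => g * g') ++ tensorSeq γ γ' := by
      simp [tensorSeq]
    by_cases hk : k < γ'.length
    · rw [List.getElem_of_eq e, List.getElem_append_left (by simpa using hk),
        List.getElem_map]
      simp only [Nat.div_eq_of_lt hk, Nat.mod_eq_of_lt hk]
      rfl
    · push_neg at hk
      obtain ⟨m, rfl⟩ : ∃ m, k = γ'.length + m := ⟨k - γ'.length, by omega⟩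
      have hm : m < γ.length * γ'.length := by
        simp only [List.length_cons] at h
        nlinarith
      have ed : (γ'.length + m) / γ'.length = m / γ'.length + 1 := by
        rw [Nat.add_comm, Nat.add_div_right _ hb]
      have em : (γ'.length + m) % γ'.length = m % γ'.length := Nat.add_mod_left _ _
      rw [List.getElem_of_eq e,
        List.getElem_append_right (by simpa using hk)]
      simp only [List.length_map]
      simp only [ed, em]
      simp only [show γ'.length + m - γ'.length = m from by omega]
      exact ih m hm

lemma head_eq_last {γ' : List ℕ} (hne' : γ' ≠ []) (hfl : γ'.head? = γ'.getLast?)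
    (hb : 0 < γ'.length) :
    γ'[0]'hb = γ'[γ'.length - 1]'(by omega) := by
  rw [List.head?_eq_head hne', List.getLast?_eq_getLast hne'] at hfl
  have h := Option.some_injective _ hfl
  rw [List.getLast_eq_getElem] at h
  rw [← h, List.getElem_zero hb]

end AlphaAux

/-- (Lemma 3.6). If `γ'_1 = γ'_{b'}`, then `α_{T^{(d)}_{γ⊗γ'}} ≤ max(α_{T^{(d)}_γ}, α_{T^{(d)}_{γ'}})`. -/
theorem alpha_tensor_bound (d : ℕ) (hd : 2 ≤ d) (γ γ' : List ℕ) (hne : γ ≠ []) (hne' : γ' ≠ [])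
    (hpos : ∀ x ∈ γ, 0 < x) (hpos' : ∀ x ∈ γ', 0 < x) (hfl : γ'.head? = γ'.getLast?) :
    tilingAlpha (seqTiling d (tensorSeq γ γ')) ≤
      max (tilingAlpha (seqTiling d γ)) (tilingAlpha (seqTiling d γ')) := by
  have ha : 0 < γ.length := List.length_pos_iff.mpr hne
  have hb : 0 < γ'.length := List.length_pos_iff.mpr hne'
  have hposT : ∀ x ∈ tensorSeq γ γ', 0 < x := by
    intro x hx
    simp only [tensorSeq, List.mem_flatMap, List.mem_map] at hx
    obtain ⟨g, hg, g', hg', rfl⟩ := hx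
    exact Nat.mul_pos (hpos _ hg) (hpos' _ hg')
  have hlenT : (tensorSeq γ γ').length = γ.length * γ'.length := AlphaAux.tensorSeq_length γ γ'
  have hneT : tensorSeq γ γ' ≠ [] := by
    rw [← List.length_pos_iff, hlenT]
    exact Nat.mul_pos ha hb
  have h1 : (1:ℝ) ≤ max (tilingAlpha (seqTiling d γ)) (tilingAlpha (seqTiling d γ')) :=
    le_trans (AlphaAux.one_le_alpha hd hne hpos) (le_max_left _ _)
  rw [AlphaAux.tilingAlpha_eq]
  apply csSup_le ⟨1, Set.mem_insert _ _⟩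
  rintro r (rfl | hr)
  · exact h1
  rcases AlphaAux.rset_char hd hneT hposT hr with rfl | ⟨k, hk, hcase⟩
  · exact h1
  have hk' : k + 1 < γ.length * γ'.length := hlenT ▸ hk
  have hdm := Nat.div_add_mod k γ'.length
  have hs : k % γ'.length < γ'.length := Nat.mod_lt _ hb
  have hkq : k / γ'.length < γ.length := (Nat.div_lt_iff_lt_mul hb).mpr (by omega)
  set q := k / γ'.length with hqdef
  set s := k % γ'.length with hsdef
  have Tk : (tensorSeq γ γ')[k]'(by omega) = γ[q]'hkq * γ'[s]'hs :=
    AlphaAux.tensorSeq_getElem γ γ' hb k (by omega)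
  have hx : ((γ[q]'hkq : ℕ) : ℝ) ≠ 0 := by
    exact_mod_cast (hpos _ (List.getElem_mem _)).ne'
  have hy : ((γ'[s]'hs : ℕ) : ℝ) ≠ 0 := by
    exact_mod_cast (hpos' _ (List.getElem_mem _)).ne'
  have Ek : ((tensorSeq γ γ').get ⟨k, by omega⟩ : ℕ) = γ[q]'hkq * γ'[s]'hs := by
    rw [List.get_eq_getElem]; exact Tk
  by_cases hss : s + 1 < γ'.length
  · -- k and k+1 lie in the same block
    have e1 : (k + 1) / γ'.length = q := by
      have h2 : k + 1 = (s + 1) + γ'.length * q := by omega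
      rw [h2, Nat.add_mul_div_left _ _ hb, Nat.div_eq_of_lt hss, Nat.zero_add]
    have e2 : (k + 1) % γ'.length = s + 1 := by
      have h2 : k + 1 = (s + 1) + γ'.length * q := by omega
      rw [h2, Nat.add_mul_mod_self_left, Nat.mod_eq_of_lt hss]
    have Tk1 : (tensorSeq γ γ')[k+1]'(by omega) = γ[q]'hkq * γ'[s+1]'hss := by
      have h3 := AlphaAux.tensorSeq_getElem γ γ' hb (k+1) (by omega)
      simp only [e1, e2] at h3
      exact h3
    have Ek1 : ((tensorSeq γ γ').get ⟨k+1, hk⟩ : ℕ) = γ[q]'hkq * γ'[s+1]'hss := by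
      rw [List.get_eq_getElem]; exact Tk1
    have hle := AlphaAux.consRatio_le (d := d) hd hne' hpos' hss
    rcases hcase with h | h
    · rw [h, Ek1, Ek]
      push_cast
      rw [mul_div_mul_left _ _ hx]
      exact le_trans hle.1 (le_max_right _ _)
    · rw [h, Ek1, Ek]
      push_cast
      rw [mul_div_mul_left _ _ hx]
      exact le_trans hle.2 (le_max_right _ _)
  · -- k+1 starts a new block
    have hsb : s + 1 = γ'.length := by omega
    have hk1 : k + 1 = γ'.length * (q + 1) := by rw [Nat.mul_succ]; omega
    have hq1 : q + 1 < γ.length := by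
      by_contra hcon
      push_neg at hcon
      have h4 : γ.length * γ'.length ≤ (q + 1) * γ'.length := Nat.mul_le_mul_right _ hcon
      rw [Nat.mul_comm (q+1)] at h4
      omega
    have e1 : (k + 1) / γ'.length = q + 1 := by rw [hk1, Nat.mul_div_cancel_left _ hb]
    have e2 : (k + 1) % γ'.length = 0 := by rw [hk1, Nat.mul_mod_right]
    have hfl0 : γ'[0]'hb = γ'[s]'hs := by
      rw [AlphaAux.head_eq_last hne' hfl hb]
      congr 1
      omega
    have Tk1 : (tensorSeq γ γ')[k+1]'(by omega) = γ[q+1]'hq1 * γ'[s]'hs := by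
      have h3 := AlphaAux.tensorSeq_getElem γ γ' hb (k+1) (by omega)
      simp only [e1, e2] at h3
      exact h3.trans (congrArg (fun t => γ[q+1]'hq1 * t) hfl0)
    have Ek1 : ((tensorSeq γ γ').get ⟨k+1, hk⟩ : ℕ) = γ[q+1]'hq1 * γ'[s]'hs := by
      rw [List.get_eq_getElem]; exact Tk1
    have hle := AlphaAux.consRatio_le (d := d) hd hne hpos hq1
    rcases hcase with h | h
    · rw [h, Ek1, Ek]
      push_cast
      rw [mul_div_mul_right _ _ hy]
      exact le_trans hle.1 (le_max_left _ _)
    · rw [h, Ek1, Ek]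
      push_cast
      rw [mul_div_mul_right _ _ hy]
      exact le_trans hle.2 (le_max_left _ _)

end
end

section
/- Let d ≥ 2 and let γ = ⟨γ_1,…,γ_b⟩ be a sequence of positive integers. Then for every B ∈ Π_{d−1}(T_γ^{(d)}), the diameter in the graph G(T_γ^{(d)}) of the set of tiles Π_{d−1}^{-1}(B; T_γ^{(d)}) = {A ∈ T_γ^{(d)} : Π_{d−1}(A) = B} is at least 1/L_{T_γ^{(d)}} − 1. -/
noncomputable section
open Classical

/-! ### Auxiliary lemmas -/

lemma tangent_lower_le_upper {d : ℕ} {A C : Tile d}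
    (h : Tile.Tangent A C ∨ Tile.Tangent C A) (i0 : Fin d) :
    C.lower i0 ≤ A.upper i0 := by
  have key : max (A.lower i0) (C.lower i0) ≤ min (A.upper i0) (C.upper i0) := by
    rcases h with ⟨i, he, hlt⟩ | ⟨i, he, hlt⟩
    · by_cases hi : i0 = i
      · subst hi; exact le_of_eq he
      · exact (hlt i0 hi).le
    · by_cases hi : i0 = i
      · subst hi
        calc max (A.lower i0) (C.lower i0) = max (C.lower i0) (A.lower i0) := max_comm _ _
          _ ≤ min (C.upper i0) (A.upper i0) := le_of_eq he
          _ = min (A.upper i0) (C.upper i0) := min_comm _ _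
      · calc max (A.lower i0) (C.lower i0) = max (C.lower i0) (A.lower i0) := max_comm _ _
          _ ≤ min (C.upper i0) (A.upper i0) := (hlt i0 hi).le
          _ = min (A.upper i0) (C.upper i0) := min_comm _ _
  exact le_trans (le_trans (le_max_right _ _) key) (min_le_left _ _)

lemma walk_upper_bound {d : ℕ} {T : Set (Tile d)} {L : ℝ}
    (hL : ∀ A ∈ T, ∀ i, Tile.len A i ≤ L) (i0 : Fin d)
    {x y : T} (p : (tangencyGraph T).Walk x y) :
    y.1.upper i0 ≤ x.1.lower i0 + ((p.length : ℝ) + 1) * L := by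
  induction p with
  | @nil u =>
    have := hL u.1 u.2 i0
    simp only [SimpleGraph.Walk.length_nil, Nat.cast_zero]
    simp only [Tile.len] at this
    linarith
  | @cons u z w h q ih =>
    have h1 : z.1.lower i0 ≤ u.1.upper i0 := tangent_lower_le_upper (h : u ≠ z ∧ (Tile.Tangent u.1 z.1 ∨ Tile.Tangent z.1 u.1)).2 i0
    have h2 : u.1.upper i0 ≤ u.1.lower i0 + L := by
      have := hL u.1 u.2 i0; simp only [Tile.len] at this; linarith
    have h3 : z.1.upper i0 ≤ z.1.lower i0 + L := by
      have := hL z.1 z.2 i0; simp only [Tile.len] at this; linarith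
    simp only [SimpleGraph.Walk.length_cons, Nat.cast_add, Nat.cast_one]
    linarith [ih]

/-- (Lemma 4.3). For every `B ∈ Π_{d-1}(T_γ^{(d)})`, the fiber `Π_{d-1}^{-1}(B; T_γ^{(d)})` has
diameter at least `1/L_{T_γ^{(d)}} - 1` in `G(T_γ^{(d)})`. -/

theorem inverse_fiber_diam (d : ℕ) (hd : 2 ≤ d) (γ : List ℕ) (hne : γ ≠ [])
    (hpos : ∀ x ∈ γ, 0 < x) (B : (seqTiling d γ)) :
    1 / tilingL (seqTiling d γ) - 1 ≤
      graphSetDiam (tangencyGraph (seqTiling d γ))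
        {A : (seqTiling d γ) | projTile A.1 = projTile B.1} := by
  classical
  have hb : 0 < γ.length := List.length_pos_iff.mpr hne
  obtain ⟨i, v, hv, hB⟩ := B.2
  set g : ℕ := γ.get i with hg_def
  have hg : 0 < g := hpos _ (γ.get_mem i)
  have hd0 : 0 < d := by omega
  set i0 : Fin d := ⟨0, hd0⟩ with hi0_def
  have hi0lt : (i0 : ℕ) < d - 1 := by simp only [hi0_def]; omega
  have hgR : (0:ℝ) < (g:ℝ) := by exact_mod_cast hg
  have hbR : (0:ℝ) < (γ.length:ℝ) := by exact_mod_cast hb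
  -- the row of tiles
  set tile : ℕ → Tile d := fun k => seqTile d γ i (Function.update v i0 k) with htile_def
  have hmem : ∀ k, k < g → tile k ∈ seqTiling d γ := by
    intro k hk
    refine ⟨i, Function.update v i0 k, fun j => ?_, rfl⟩
    constructor
    · intro hj
      by_cases hji : j = i0
      · subst hji; simpa [hg_def] using hk
      · rw [Function.update_of_ne hji]; exact (hv j).1 hj
    · intro hj
      have hji : j ≠ i0 := fun hji => hj (hji ▸ hi0lt)
      rw [Function.update_of_ne hji]; exact (hv j).2 hj
  -- projections agree
  have hproj : ∀ k, projTile (tile k) = projTile B.1 := by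
    intro k
    rw [hB]
    have hupd : ∀ (j : Fin (d-1)),
        Function.update v i0 k ⟨j.val + 1, by have := j.isLt; omega⟩
          = v ⟨j.val + 1, by have := j.isLt; omega⟩ := by
      intro j
      apply Function.update_of_ne
      intro hj
      have := congrArg Fin.val hj
      simp [hi0_def] at this
    simp only [projTile, htile_def, seqTile]
    congr 1 <;> funext j <;> rw [hupd j]
  -- coordinate-i0 values
  have hlow : ∀ k, (tile k).lower i0 = (k : ℝ) / (g : ℝ) := by
    intro k
    simp [htile_def, seqTile, hi0lt, Function.update_self, hg_def]
  have hupp : ∀ k, (tile k).upper i0 = ((k : ℝ) + 1) / (g : ℝ) := by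
    intro k
    simp [htile_def, seqTile, hi0lt, Function.update_self, hg_def]
  -- adjacency along the row
  have hadj : ∀ k (hk : k + 1 < g),
      (tangencyGraph (seqTiling d γ)).Adj
        ⟨tile k, hmem k (by omega)⟩ ⟨tile (k+1), hmem (k+1) hk⟩ := by
    intro k hk
    refine And.intro ?_ ?_
    · intro hEq
      have hEq' : tile k = tile (k+1) := congrArg Subtype.val hEq
      have h2 := congrArg (fun A => Tile.lower A i0) hEq'
      simp only [hlow k, hlow (k+1)] at h2
      rw [div_eq_div_iff hgR.ne' hgR.ne'] at h2
      have : (k:ℝ) = (k:ℝ) + 1 := by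
        push_cast at h2
        nlinarith
      linarith
    · left
      refine ⟨i0, ?_, ?_⟩
      · rw [hlow k, hlow (k+1), hupp k, hupp (k+1)]
        push_cast
        rw [max_eq_right (by gcongr <;> linarith), min_eq_left (by gcongr <;> linarith)]
      · intro j hj
        have hup : Function.update v i0 k j = v j := Function.update_of_ne hj _ _
        have hup' : Function.update v i0 (k+1) j = v j := Function.update_of_ne hj _ _
        simp only [htile_def, seqTile]
        by_cases hjd : (j : ℕ) < d - 1
        · rw [if_pos hjd, if_pos hjd, if_pos hjd, if_pos hjd, hup, hup',
            max_self, min_self]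
          rw [div_lt_div_iff₀ hgR hgR]
          nlinarith [hgR]
        · rw [if_neg hjd, if_neg hjd, if_neg hjd, if_neg hjd, max_self, min_self]
          rw [div_lt_div_iff₀ hbR hbR]
          nlinarith [hbR]
  -- reachability along the row
  have hreach : ∀ k (hk : k < g),
      (tangencyGraph (seqTiling d γ)).Reachable
        ⟨tile 0, hmem 0 hg⟩ ⟨tile k, hmem k hk⟩ := by
    intro k
    induction k with
    | zero => intro hk; exact SimpleGraph.Reachable.refl _
    | succ n ih =>
      intro hk
      exact (ih (by omega)).trans (hadj n hk).reachable
  -- finiteness of the tiling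
  have hTfin : (seqTiling d γ).Finite := by
    have : seqTiling d γ ⊆ Set.range
        (fun p : (j : Fin γ.length) × (Fin d → Fin (γ.get j)) =>
          seqTile d γ p.1 (fun m => (p.2 m : ℕ))) := by
      rintro A ⟨ii, vv, hvv, rfl⟩
      have hvlt : ∀ m : Fin d, vv m < γ.get ii := by
        intro m
        by_cases hm : (m : ℕ) < d - 1
        · exact (hvv m).1 hm
        · rw [(hvv m).2 hm]; exact hpos _ (γ.get_mem ii)
      exact ⟨⟨ii, fun m => ⟨vv m, hvlt m⟩⟩, rfl⟩
    exact (Set.finite_range _).subset this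
  haveI : Finite (seqTiling d γ) := hTfin.to_subtype
  -- bound on side lengths
  set L := tilingL (seqTiling d γ) with hL_def
  have hlenfin : {r : ℝ | ∃ A ∈ seqTiling d γ, ∃ m, r = Tile.len A m}.Finite := by
    have : {r : ℝ | ∃ A ∈ seqTiling d γ, ∃ m, r = Tile.len A m}
        ⊆ ⋃ A ∈ seqTiling d γ, Set.range (Tile.len A) := by
      rintro r ⟨A, hA, m, rfl⟩
      exact Set.mem_biUnion hA ⟨m, rfl⟩
    exact (hTfin.biUnion (fun A _ => Set.finite_range _)).subset this
  have hbddL : BddAbove {r : ℝ | ∃ A ∈ seqTiling d γ, ∃ m, r = Tile.len A m} :=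
    hlenfin.bddAbove
  have hlenle : ∀ A ∈ seqTiling d γ, ∀ m, Tile.len A m ≤ L :=
    fun A hA m => le_csSup hbddL ⟨A, hA, m, rfl⟩
  have hlen0 : Tile.len (tile 0) i0 = 1 / (g:ℝ) := by
    simp only [Tile.len, hlow 0, hupp 0]
    push_cast
    ring
  have hLpos : 0 < L := by
    have h1 : Tile.len (tile 0) i0 ≤ L := hlenle _ (hmem 0 hg) i0
    rw [hlen0] at h1
    have : (0:ℝ) < 1 / (g:ℝ) := by positivity
    linarith
  -- the two extreme tiles
  have hg1 : g - 1 < g := by omega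
  obtain ⟨p, hp⟩ := (hreach (g-1) hg1).exists_walk_length_eq_dist
  have hbound := walk_upper_bound hlenle i0 p
  have hupval : (tile (g-1)).upper i0 = 1 := by
    rw [hupp (g-1)]
    rw [Nat.cast_sub (by omega)]
    push_cast
    field_simp
    ring
  have hlowval : (tile 0).lower i0 = 0 := by
    rw [hlow 0]; simp
  rw [hupval, hlowval, hp] at hbound
  set n : ℕ := (tangencyGraph (seqTiling d γ)).dist ⟨tile 0, hmem 0 hg⟩ ⟨tile (g-1), hmem (g-1) hg1⟩
    with hn_def
  have hdistge : 1 / L - 1 ≤ (n : ℝ) := by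
    have h1 : 1 / L ≤ (n:ℝ) + 1 := by
      rw [div_le_iff₀ hLpos]
      linarith
    linarith
  -- conclude via sSup
  have hDfin : {r : ℝ | ∃ x ∈ {A : (seqTiling d γ) | projTile A.1 = projTile B.1},
      ∃ y ∈ {A : (seqTiling d γ) | projTile A.1 = projTile B.1},
      r = ((tangencyGraph (seqTiling d γ)).dist x y : ℝ)}.Finite := by
    have hsub : {r : ℝ | ∃ x ∈ {A : (seqTiling d γ) | projTile A.1 = projTile B.1},
        ∃ y ∈ {A : (seqTiling d γ) | projTile A.1 = projTile B.1},
        r = ((tangencyGraph (seqTiling d γ)).dist x y : ℝ)}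
        ⊆ (fun q : (seqTiling d γ) × (seqTiling d γ) =>
            ((tangencyGraph (seqTiling d γ)).dist q.1 q.2 : ℝ)) '' Set.univ := by
      rintro r ⟨x, _, y, _, rfl⟩
      exact ⟨(x, y), Set.mem_univ _, rfl⟩
    exact (Set.finite_univ.image _).subset hsub
  refine le_trans hdistge ?_
  apply le_csSup hDfin.bddAbove
  exact ⟨⟨tile 0, hmem 0 hg⟩, hproj 0, ⟨tile (g-1), hmem (g-1) hg1⟩, hproj (g-1), rfl⟩

end
end
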